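/- There exists a universal constant C̃ > 0 such that for every 0 < μ ≤ L, every f ∈ S_{μ,L} with minimizer x⋆, and every starting point x₀ ≠ x⋆, the speed restarting time of the solution X of the ODE Ẍ + (3/t)Ẋ + ∇f(X) = 0 with X(0) = x₀, Ẋ(0) = 0 satisfies T(x₀; f) ≤ (4/(5√L)) · exp(C̃ · L/μ). -/

import Mathlib

open Set Filter Topology

noncomputable section

abbrev E (n : ℕ) := EuclideanSpace ℝ (Fin n)

def MemFL (n : ℕ) (L : ℝ) (f : E n → ℝ) : Prop :=
  ConvexOn ℝ Set.univ f ∧ ContDiff ℝ 1 f ∧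
    ∀ x y, ‖gradient f x - gradient f y‖ ≤ L * ‖x - y‖

/-- The class `S_{μ,L}`: members of `F_L` such that `f(x) - μ‖x‖²/2` is convex. -/
def MemS (n : ℕ) (μ L : ℝ) (f : E n → ℝ) : Prop :=
  MemFL n L f ∧ ConvexOn ℝ Set.univ (fun x => f x - μ / 2 * ‖x‖ ^ 2)

def NesterovSol (n : ℕ) (f : E n → ℝ) (x0 : E n) (X : ℝ → E n) : Prop :=
  X 0 = x0 ∧
  ContDiffOn ℝ 1 X (Set.Ici 0) ∧
  ContDiffOn ℝ 2 X (Set.Ioi 0) ∧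
  derivWithin X (Set.Ici 0) 0 = 0 ∧
  ∀ t > (0:ℝ), deriv (deriv X) t + (3 / t) • deriv X t + gradient f (X t) = 0

/-- The speed restarting time of a trajectory `X`. -/
def SpeedRestartTime (n : ℕ) (X : ℝ → E n) : ℝ :=
  sSup {t : ℝ | 0 < t ∧ ∀ u ∈ Set.Ioo (0:ℝ) t, 0 < deriv (fun v => ‖deriv X v‖ ^ 2) u}

open InnerProductSpace intervalIntegral MeasureTheory
open scoped RealInnerProductSpace

lemma strong_ineq {n : ℕ} {μ : ℝ} (f : E n → ℝ) (hf : ContDiff ℝ 1 f)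
    (hconv : ConvexOn ℝ Set.univ (fun x => f x - μ / 2 * ‖x‖ ^ 2)) (a b : E n) :
    f a + ⟪gradient f a, b - a⟫_ℝ + μ / 2 * ‖b - a‖ ^ 2 ≤ f b := by
  set c : ℝ → E n := fun r => a + r • (b - a) with hcdef
  have hc : ∀ r : ℝ, HasDerivAt c (b - a) r := by
    intro r
    have h1 : HasDerivAt (fun r : ℝ => r • (b - a)) ((1:ℝ) • (b - a)) r :=
      (hasDerivAt_id r).smul_const (b - a)
    simpa [hcdef, one_smul] using (h1.const_add a)
  have hc0 : c 0 = a := by simp [hcdef]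
  have hc1 : c 1 = b := by simp [hcdef]
  set ψ : ℝ → ℝ := fun r => f (c r) - μ / 2 * ‖c r‖ ^ 2 with hψdef
  have hψconv : ConvexOn ℝ Set.univ ψ := by
    have := hconv.comp_affineMap (AffineMap.lineMap a b : ℝ →ᵃ[ℝ] E n)
    have heq : ((fun x => f x - μ / 2 * ‖x‖ ^ 2) ∘ (AffineMap.lineMap a b : ℝ →ᵃ[ℝ] E n)) = ψ := by
      funext r
      have hl : (AffineMap.lineMap a b : ℝ →ᵃ[ℝ] E n) r = c r := by
        rw [AffineMap.lineMap_apply, hcdef]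
        simp only [vsub_eq_sub, vadd_eq_add]
        abel
      show f ((AffineMap.lineMap a b : ℝ →ᵃ[ℝ] E n) r) - μ / 2 * ‖(AffineMap.lineMap a b : ℝ →ᵃ[ℝ] E n) r‖ ^ 2 = ψ r
      rw [hl]
    rw [heq] at this
    simpa using this
  have hf1 : HasDerivAt (fun r => f (c r)) (fderiv ℝ f a (b - a)) 0 := by
    have := (hf.differentiable one_ne_zero (c 0)).hasFDerivAt.comp_hasDerivAt 0 (hc 0)
    rw [hc0] at this
    exact this
  have hn : HasDerivAt (fun r => ‖c r‖ ^ 2) (2 * ⟪a, b - a⟫_ℝ) 0 := by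
    have H := (hc 0).inner ℝ (hc 0)
    rw [hc0] at H
    have heq : (fun r => ‖c r‖ ^ 2) = fun r => ⟪c r, c r⟫_ℝ := by
      funext r; rw [real_inner_self_eq_norm_sq]
    rw [heq]
    exact H.congr_deriv (by rw [real_inner_comm]; ring)
  have hψ : HasDerivAt ψ (fderiv ℝ f a (b - a) - μ / 2 * (2 * ⟪a, b - a⟫_ℝ)) 0 :=
    hf1.sub (hn.const_mul (μ / 2))
  have hslope := hψconv.le_slope_of_hasDerivAt (mem_univ (0:ℝ)) (mem_univ (1:ℝ)) one_pos hψ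
  rw [slope_def_field] at hslope
  have hkey : fderiv ℝ f a (b - a) - μ / 2 * (2 * ⟪a, b - a⟫_ℝ) ≤ ψ 1 - ψ 0 := by
    calc fderiv ℝ f a (b - a) - μ / 2 * (2 * ⟪a, b - a⟫_ℝ) ≤ (ψ 1 - ψ 0) / (1 - 0) := hslope
    _ = ψ 1 - ψ 0 := by ring
  have hgrad : ⟪gradient f a, b - a⟫_ℝ = fderiv ℝ f a (b - a) := toDual_symm_apply
  have hψ1 : ψ 1 = f b - μ / 2 * ‖b‖ ^ 2 := by rw [hψdef]; simp only [hc1]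
  have hψ0 : ψ 0 = f a - μ / 2 * ‖a‖ ^ 2 := by rw [hψdef]; simp only [hc0]
  have hexp : ‖b - a‖ ^ 2 = ‖b‖ ^ 2 - 2 * ⟪b, a⟫_ℝ + ‖a‖ ^ 2 := norm_sub_sq_real b a
  have hin : ⟪a, b - a⟫_ℝ = ⟪b, a⟫_ℝ - ‖a‖ ^ 2 := by
    rw [inner_sub_right, real_inner_self_eq_norm_sq, real_inner_comm]
  rw [hψ1, hψ0, hin] at hkey
  rw [hgrad, hexp]
  nlinarith [hkey]

set_option maxHeartbeats 2000000 in
lemma main_bound {n : ℕ} {μ L : ℝ} (hμ : 0 < μ) (hμL : μ ≤ L)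
    {f : E n → ℝ} (hf : MemS n μ L f) {xstar : E n} (hmin : IsMinOn f Set.univ xstar)
    {x0 : E n} (hx0 : x0 ≠ xstar) {X : ℝ → E n} (hX : NesterovSol n f x0 X)
    {t : ℝ} (ht : 0 < t)
    (hder : ∀ u ∈ Set.Ioo (0:ℝ) t, 0 < deriv (fun v => ‖deriv X v‖ ^ 2) u) :
    t ≤ 4 / (5 * Real.sqrt L) * Real.exp (17 * L / μ) := by
  obtain ⟨⟨hconvf, hC1, hLip⟩, hsconv⟩ := hf
  obtain ⟨hX0, hXC1, hXC2, hD0, hODE⟩ := hX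
  have hL : 0 < L := hμ.trans_le hμL
  have hsL : 0 < Real.sqrt L := Real.sqrt_pos.2 hL
  set τ : ℝ := 4 / (5 * Real.sqrt L) with hτdef
  have hτ : 0 < τ := by positivity
  have hτsq : τ ^ 2 = 16 / (25 * L) := by
    rw [hτdef]
    rw [div_pow, mul_pow, Real.sq_sqrt hL.le]
    norm_num
  have hexp1 : 1 ≤ Real.exp (17 * L / μ) := by
    rw [Real.one_le_exp_iff]; positivity
  rcases le_or_gt t τ with htτ | hτt
  · calc t ≤ τ := htτ
      _ = τ * 1 := (mul_one τ).symm
      _ ≤ τ * Real.exp (17 * L / μ) := by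
          exact mul_le_mul_of_nonneg_left hexp1 hτ.le
  -- main case
  have hXcont : ContinuousOn X (Ici 0) := hXC1.continuousOn
  set D := derivWithin X (Set.Ici 0) with hDdef
  have hDcont : ContinuousOn D (Ici 0) :=
    hXC1.continuousOn_derivWithin (uniqueDiffOn_Ici 0) le_rfl
  have hDeq : ∀ s : ℝ, 0 < s → D s = deriv X s := fun s hs =>
    derivWithin_of_mem_nhds (Ici_mem_nhds hs)
  have hXd : ∀ s : ℝ, 0 < s → HasDerivAt X (deriv X s) s := fun s hs =>
    ((hXC2.differentiableOn (by norm_num)).differentiableAt (Ioi_mem_nhds hs)).hasDerivAt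
  have hdX1 : ContDiffOn ℝ 1 (deriv X) (Ioi 0) := hXC2.deriv_of_isOpen isOpen_Ioi (by norm_num)
  have hdXcont : ContinuousOn (deriv X) (Ioi 0) := hdX1.continuousOn
  have hdXd : ∀ s : ℝ, 0 < s → HasDerivAt (deriv X) (deriv (deriv X) s) s := fun s hs =>
    ((hdX1.differentiableOn one_ne_zero).differentiableAt (Ioi_mem_nhds hs)).hasDerivAt
  have hgcont : Continuous (gradient f) := by
    have hlw : LipschitzWith (Real.toNNReal L) (gradient f) := by
      apply LipschitzWith.of_dist_le_mul
      intro x y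
      rw [dist_eq_norm, dist_eq_norm, Real.coe_toNNReal _ hL.le]
      exact hLip x y
    exact hlw.continuous
  have hgstar : gradient f xstar = 0 := by
    have hloc : IsLocalMin f xstar := hmin.isLocalMin univ_mem
    have h := hloc.fderiv_eq_zero
    simp [gradient, h]
  have hSC := fun a b => strong_ineq (μ := μ) f hC1 hsconv a b
  set Δ : ℝ := f x0 - f xstar with hΔdef
  have hΔ : μ / 2 * ‖x0 - xstar‖ ^ 2 ≤ Δ := by
    have h := hSC xstar x0
    rw [hgstar] at h
    simp only [inner_zero_left] at h
    rw [hΔdef]; linarith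
  have hΔpos : 0 < Δ := by
    have hne : x0 - xstar ≠ 0 := sub_ne_zero.2 hx0
    have h5 : 0 < ‖x0 - xstar‖ := norm_pos_iff.2 hne
    nlinarith [hΔ, mul_pos hμ (pow_pos h5 2)]
  have hg0sq : 2 * μ * Δ ≤ ‖gradient f x0‖ ^ 2 := by
    have h1 := hSC x0 xstar
    have h2 : -(‖gradient f x0‖ * ‖xstar - x0‖) ≤ ⟪gradient f x0, xstar - x0⟫_ℝ :=
      (abs_le.mp (abs_real_inner_le_norm (gradient f x0) (xstar - x0))).1
    rw [hΔdef]
    nlinarith [sq_nonneg (‖gradient f x0‖ - μ * ‖xstar - x0‖), h1, h2, hμ]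
  -- monotonicity of the speed
  have hV2cont : ContinuousOn (fun u => ‖deriv X u‖ ^ 2) (Ioo 0 t) :=
    ((hdXcont.mono Ioo_subset_Ioi_self).norm.pow 2)
  have hmono : StrictMonoOn (fun u => ‖deriv X u‖ ^ 2) (Ioo 0 t) :=
    strictMonoOn_of_deriv_pos (convex_Ioo 0 t) hV2cont
      (by rw [interior_Ioo]; exact hder)
  have hVmono : ∀ u u', u ∈ Ioo (0:ℝ) t → u' ∈ Ioo (0:ℝ) t → u ≤ u' →
      ‖deriv X u‖ ≤ ‖deriv X u'‖ := by
    intro u u' hu hu' huu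
    rcases eq_or_lt_of_le huu with rfl | hlt
    · exact le_rfl
    · have h : ‖deriv X u‖ ^ 2 ≤ ‖deriv X u'‖ ^ 2 := (hmono hu hu' hlt).le
      exact (pow_le_pow_iff_left₀ (norm_nonneg _) (norm_nonneg _) two_ne_zero).mp h
  set vτ : ℝ := ‖deriv X τ‖ with hvτdef
  have hτmem : τ ∈ Ioo (0:ℝ) t := ⟨hτ, hτt⟩
  have hDbound : ∀ s ∈ Icc (0:ℝ) τ, ‖D s‖ ≤ vτ := by
    intro s hs
    rcases eq_or_lt_of_le hs.1 with rfl | hs0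
    · rw [hD0]; simp [hvτdef]
    · rw [hDeq s hs0]
      exact hVmono s τ ⟨hs0, hs.2.trans_lt hτt⟩ hτmem hs.2
  -- distance bound ‖X u - x0‖ ≤ u * vτ on [0, τ]
  have hXftc : ∀ u ∈ Icc (0:ℝ) τ, ‖X u - x0‖ ≤ u * vτ := by
    intro u hu
    have h0u : (0:ℝ) ≤ u := hu.1
    have hIcc : Icc (0:ℝ) u ⊆ Ici 0 := fun s hs => hs.1
    have hint : ∫ s in (0:ℝ)..u, D s = X u - X 0 :=
      integral_eq_sub_of_hasDerivAt_of_le h0u (hXcont.mono hIcc)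
        (fun s hs => by rw [hDeq s hs.1]; exact hXd s hs.1)
        (by
          apply ContinuousOn.intervalIntegrable
          rw [uIcc_of_le h0u]
          exact hDcont.mono hIcc)
    rw [hX0] at hint
    calc ‖X u - x0‖ = ‖∫ s in (0:ℝ)..u, D s‖ := by rw [hint]
      _ ≤ vτ * |u - 0| := by
          apply intervalIntegral.norm_integral_le_of_norm_le_const
          intro s hs
          rw [uIoc_of_le h0u] at hs
          exact hDbound s ⟨hs.1.le, hs.2.trans hu.2⟩
      _ = u * vτ := by rw [sub_zero, abs_of_nonneg h0u]; ring
  -- integral representation of the velocity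
  have hgXcont : ContinuousOn (fun s => gradient f (X s)) (Ici 0) :=
    hgcont.comp_continuousOn hXcont
  have hYftc : ∫ s in (0:ℝ)..τ, -(s ^ 3 • gradient f (X s)) = τ ^ 3 • deriv X τ := by
    set Y : ℝ → E n := fun s => s ^ 3 • D s with hYdef
    have hYcont : ContinuousOn Y (Icc 0 τ) :=
      (continuous_pow 3).continuousOn.smul (hDcont.mono (fun s hs => hs.1))
    have hYd : ∀ s ∈ Ioo (0:ℝ) τ, HasDerivAt Y (-(s ^ 3 • gradient f (X s))) s := by
      intro s hs
      have hs0 : 0 < s := hs.1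
      have heq : (fun r => r ^ 3 • deriv X r) =ᶠ[nhds s] Y := by
        filter_upwards [Ioi_mem_nhds hs0] with r hr
        have hYr : Y r = r ^ 3 • D r := rfl
        rw [hYr, hDeq r hr]
      have hc : HasDerivAt (fun r : ℝ => r ^ 3) (3 * s ^ 2) s := by
        simpa using hasDerivAt_pow 3 s
      have h1 : HasDerivAt (fun r : ℝ => r ^ 3 • deriv X r)
          (s ^ 3 • deriv (deriv X) s + ((3:ℝ) * s ^ 2) • deriv X s) s :=
        hc.smul (hdXd s hs0)
      have hd2 : deriv (deriv X) s = -((3 / s) • deriv X s) - gradient f (X s) := by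
        have h := hODE s hs0
        have h' : deriv (deriv X) s + ((3 / s) • deriv X s + gradient f (X s)) = 0 := by
          rw [← add_assoc]; exact h
        rw [add_eq_zero_iff_eq_neg] at h'
        rw [h', neg_add]
        abel
      have h2 : s ^ 3 • deriv (deriv X) s + ((3:ℝ) * s ^ 2) • deriv X s
          = -(s ^ 3 • gradient f (X s)) := by
        rw [hd2, smul_sub, smul_neg, smul_smul]
        have hss : s ^ 3 * (3 / s) = 3 * s ^ 2 := by
          field_simp
        rw [hss]
        abel
      rw [h2] at h1
      exact heq.hasDerivAt_iff.mp h1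
    have hint : IntervalIntegrable (fun s => -(s ^ 3 • gradient f (X s))) volume 0 τ := by
      apply ContinuousOn.intervalIntegrable
      rw [uIcc_of_le hτ.le]
      exact ((continuous_pow 3).continuousOn.smul
        (hgXcont.mono (fun s hs => hs.1))).neg
    have h := integral_eq_sub_of_hasDerivAt_of_le hτ.le hYcont hYd hint
    rw [h, hYdef]
    simp only
    rw [hDeq τ hτ]
    simp
  -- splitting the integral
  have hint1 : IntervalIntegrable (fun s : ℝ => s ^ 3 • gradient f x0) volume 0 τ :=
    ((continuous_pow 3).smul continuous_const).intervalIntegrable 0 τ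
  have hint2 : IntervalIntegrable
      (fun s : ℝ => s ^ 3 • (gradient f (X s) - gradient f x0)) volume 0 τ := by
    apply ContinuousOn.intervalIntegrable
    rw [uIcc_of_le hτ.le]
    exact (continuous_pow 3).continuousOn.smul
      ((hgXcont.mono (fun s hs => hs.1)).sub continuousOn_const)
  obtain ⟨B, hBdef⟩ : ∃ b : E n,
      b = ∫ s in (0:ℝ)..τ, s ^ 3 • (gradient f (X s) - gradient f x0) := ⟨_, rfl⟩
  have hsplit : ∫ s in (0:ℝ)..τ, s ^ 3 • gradient f (X s)
      = (τ ^ 4 / 4) • gradient f x0 + B := by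
    have h1 : ∀ s : ℝ, s ^ 3 • gradient f (X s)
        = s ^ 3 • gradient f x0 + s ^ 3 • (gradient f (X s) - gradient f x0) := by
      intro s; rw [← smul_add]; congr 1; abel
    rw [hBdef]
    simp only [h1]
    rw [intervalIntegral.integral_add hint1 hint2,
      intervalIntegral.integral_smul_const (fun s : ℝ => s ^ 3) (gradient f x0),
      integral_pow]
    norm_num
  have hpert : ‖B‖ ≤ L * vτ * τ ^ 5 / 5 := by
    have hb : ∀ s ∈ Icc (0:ℝ) τ, ‖s ^ 3 • (gradient f (X s) - gradient f x0)‖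
        ≤ (L * vτ) * s ^ 4 := by
      intro s hs
      rw [norm_smul, Real.norm_eq_abs, abs_of_nonneg (pow_nonneg hs.1 3)]
      have hl : ‖gradient f (X s) - gradient f x0‖ ≤ L * (s * vτ) := by
        calc ‖gradient f (X s) - gradient f x0‖ ≤ L * ‖X s - x0‖ := hLip (X s) x0
          _ ≤ L * (s * vτ) := by
              apply mul_le_mul_of_nonneg_left (hXftc s hs) hL.le
      calc s ^ 3 * ‖gradient f (X s) - gradient f x0‖ ≤ s ^ 3 * (L * (s * vτ)) := by
            apply mul_le_mul_of_nonneg_left hl (pow_nonneg hs.1 3)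
        _ = (L * vτ) * s ^ 4 := by ring
    rw [hBdef]
    calc ‖∫ s in (0:ℝ)..τ, s ^ 3 • (gradient f (X s) - gradient f x0)‖
        ≤ ∫ s in (0:ℝ)..τ, ‖s ^ 3 • (gradient f (X s) - gradient f x0)‖ :=
          intervalIntegral.norm_integral_le_integral_norm hτ.le
      _ ≤ ∫ s in (0:ℝ)..τ, (L * vτ) * s ^ 4 := by
          apply intervalIntegral.integral_mono_on hτ.le (hint2.norm) _ hb
          exact (continuous_const.mul (continuous_pow 4)).intervalIntegrable 0 τ
      _ = (L * vτ) * (τ ^ 5 / 5) := by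
          rw [intervalIntegral.integral_const_mul, integral_pow]
          norm_num
      _ = L * vτ * τ ^ 5 / 5 := by ring
  -- lower bound on the speed at τ
  have hlow : τ * ‖gradient f x0‖ / 8 ≤ vτ := by
    have hvnn : 0 ≤ vτ := norm_nonneg _
    have h1 : ‖τ ^ 3 • deriv X τ‖ = τ ^ 3 * vτ := by
      rw [norm_smul, Real.norm_eq_abs, abs_of_pos (pow_pos hτ 3)]
    have h2 : τ ^ 3 • deriv X τ = -((τ ^ 4 / 4) • gradient f x0 + B) := by
      rw [← hsplit, ← hYftc, intervalIntegral.integral_neg]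
    have h4 : ‖(τ ^ 4 / 4) • gradient f x0‖ = τ ^ 4 / 4 * ‖gradient f x0‖ := by
      rw [norm_smul, Real.norm_eq_abs, abs_of_pos (by positivity)]
    have h3 : τ ^ 4 / 4 * ‖gradient f x0‖ - L * vτ * τ ^ 5 / 5 ≤ τ ^ 3 * vτ := by
      rw [← h1, h2, norm_neg]
      have h6 : ‖(τ ^ 4 / 4) • gradient f x0‖
          ≤ ‖(τ ^ 4 / 4) • gradient f x0 + B‖ + ‖B‖ := by
        exact norm_le_add_norm_add _ _
      rw [h4] at h6
      linarith [hpert]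
    have h5 : L * τ ^ 5 = τ ^ 3 * (16 / 25) := by
      have h5a : L * τ ^ 5 = (τ ^ 2 * L) * τ ^ 3 := by ring
      rw [h5a, hτsq]
      field_simp
    have h5' : L * vτ * τ ^ 5 / 5 = τ ^ 3 * ((16:ℝ) / 125) * vτ := by
      have h5b : L * vτ * τ ^ 5 = vτ * (L * τ ^ 5) := by ring
      rw [div_eq_iff (by norm_num : (5:ℝ) ≠ 0), h5b, h5]
      ring
    rw [h5'] at h3
    have hA : τ ^ 3 * (τ * ‖gradient f x0‖ / 4) ≤ τ ^ 3 * ((141:ℝ) / 125 * vτ) := by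
      nlinarith [h3]
    have h9 : τ * ‖gradient f x0‖ / 4 ≤ (141:ℝ) / 125 * vτ :=
      le_of_mul_le_mul_left hA (pow_pos hτ 3)
    linarith
  -- energy function
  set W : ℝ → ℝ := fun s => f (X s) + ‖D s‖ ^ 2 / 2 with hWdef
  have hWcont : ContinuousOn W (Ici 0) :=
    (hC1.continuous.comp_continuousOn hXcont).add ((hDcont.norm.pow 2).div_const 2)
  have hWd : ∀ s : ℝ, 0 < s → HasDerivAt W (-(3 / s) * ‖deriv X s‖ ^ 2) s := by
    intro s hs
    have heq : (fun r => f (X r) + ‖deriv X r‖ ^ 2 / 2) =ᶠ[nhds s] W := by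
      filter_upwards [Ioi_mem_nhds hs] with r hr
      have hWr : W r = f (X r) + ‖D r‖ ^ 2 / 2 := rfl
      rw [hWr, hDeq r hr]
    have h1 : HasDerivAt (fun r => f (X r)) ⟪gradient f (X s), deriv X s⟫_ℝ s := by
      have hcomp := ((hC1.differentiable one_ne_zero) (X s)).hasFDerivAt.comp_hasDerivAt s (hXd s hs)
      have hval : (fderiv ℝ f (X s)) (deriv X s) = ⟪gradient f (X s), deriv X s⟫_ℝ :=
        toDual_symm_apply.symm
      rw [hval] at hcomp
      exact hcomp
    have h2 : HasDerivAt (fun r => ‖deriv X r‖ ^ 2 / 2) ⟪deriv (deriv X) s, deriv X s⟫_ℝ s := by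
      have H := ((hdXd s hs).inner ℝ (hdXd s hs)).div_const 2
      have heq2 : (fun r => ‖deriv X r‖ ^ 2 / 2) = fun r => ⟪deriv X r, deriv X r⟫_ℝ / 2 := by
        funext r; rw [real_inner_self_eq_norm_sq]
      rw [heq2]
      exact H.congr_deriv (by rw [real_inner_comm]; ring)
    have hsum := h1.add h2
    have hval2 : ⟪gradient f (X s), deriv X s⟫_ℝ + ⟪deriv (deriv X) s, deriv X s⟫_ℝ
        = -(3 / s) * ‖deriv X s‖ ^ 2 := by
      rw [← inner_add_left]
      have hode : gradient f (X s) + deriv (deriv X) s = -((3 / s) • deriv X s) := by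
        have h := hODE s hs
        have h' : (gradient f (X s) + deriv (deriv X) s) + (3 / s) • deriv X s = 0 := by
          rw [← h]; abel
        exact eq_neg_of_add_eq_zero_left h'
      rw [hode, inner_neg_left, real_inner_smul_left, real_inner_self_eq_norm_sq]
      ring
    rw [hval2] at hsum
    exact heq.hasDerivAt_iff.mp hsum
  have hWτ : W τ ≤ f x0 := by
    have hanti : AntitoneOn W (Icc 0 τ) := by
      apply antitoneOn_of_deriv_nonpos (convex_Icc 0 τ)
        (hWcont.mono (fun s hs => hs.1))
      · intro s hs
        rw [interior_Icc] at hs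
        exact (hWd s hs.1).differentiableAt.differentiableWithinAt
      · intro s hs
        rw [interior_Icc] at hs
        rw [(hWd s hs.1).deriv]
        have h2 : 0 < 3 / s := div_pos (by norm_num) hs.1
        nlinarith [sq_nonneg ‖deriv X s‖]
    have h := hanti (left_mem_Icc.2 hτ.le) (right_mem_Icc.2 hτ.le) hτ.le
    have hW0 : W 0 = f x0 := by
      have hw : W 0 = f (X 0) + ‖D 0‖ ^ 2 / 2 := rfl
      rw [hw, hD0, hX0]; simp
    rw [hW0] at h
    exact h
  -- key log estimate
  have hstep : ∀ t' ∈ Ioo τ t, 3 * vτ ^ 2 * (Real.log t' - Real.log τ) ≤ Δ := by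
    intro t' ht'
    set G : ℝ → ℝ := fun s => W s + 3 * vτ ^ 2 * Real.log s with hGdef
    have hGd : ∀ s ∈ Ioo τ t', HasDerivAt G
        (-(3 / s) * ‖deriv X s‖ ^ 2 + 3 * vτ ^ 2 * s⁻¹) s := by
      intro s hs
      have hs0 : 0 < s := hτ.trans hs.1
      exact (hWd s hs0).add ((Real.hasDerivAt_log hs0.ne').const_mul (3 * vτ ^ 2))
    have hGanti : AntitoneOn G (Icc τ t') := by
      apply antitoneOn_of_deriv_nonpos (convex_Icc τ t')
      · apply ContinuousOn.add (hWcont.mono (fun s hs => hτ.le.trans hs.1))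
        apply continuousOn_const.mul
        apply Real.continuousOn_log.mono
        intro s hs
        simp only [mem_compl_iff, mem_singleton_iff]
        exact (hτ.trans_le hs.1).ne'
      · intro s hs
        rw [interior_Icc] at hs
        exact (hGd s hs).differentiableAt.differentiableWithinAt
      · intro s hs
        rw [interior_Icc] at hs
        have hs0 : 0 < s := hτ.trans hs.1
        rw [(hGd s hs).deriv]
        have hvs : vτ ≤ ‖deriv X s‖ :=
          hVmono τ s hτmem ⟨hs0, hs.2.trans ht'.2⟩ hs.1.le
        have h1 : vτ ^ 2 ≤ ‖deriv X s‖ ^ 2 := by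
          nlinarith [norm_nonneg (deriv X s), norm_nonneg (deriv X τ)]
        have h2 : 0 < s⁻¹ := by positivity
        have h3 : -(3 / s) * ‖deriv X s‖ ^ 2 ≤ -(3 / s) * vτ ^ 2 := by
          have h4 : 0 < 3 / s := div_pos (by norm_num) hs0
          nlinarith
        have h5 : 3 * vτ ^ 2 * s⁻¹ = (3 / s) * vτ ^ 2 := by
          field_simp
        linarith [h3, h5.le, h5.ge]
    have hG := hGanti (left_mem_Icc.2 ht'.1.le) (right_mem_Icc.2 ht'.1.le) ht'.1.le
    have hGt' : G t' = W t' + 3 * vτ ^ 2 * Real.log t' := rfl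
    have hGτ : G τ = W τ + 3 * vτ ^ 2 * Real.log τ := rfl
    rw [hGt', hGτ] at hG
    have hWt' : f xstar ≤ W t' := by
      have h1 : f xstar ≤ f (X t') := hmin (mem_univ _)
      have h2 : W t' = f (X t') + ‖D t'‖ ^ 2 / 2 := rfl
      rw [h2]
      have h3 : (0:ℝ) ≤ ‖D t'‖ ^ 2 / 2 := by positivity
      linarith
    rw [hΔdef]
    linarith [hWτ, hWt', hG]
  -- conclusion
  have hvτsq : μ * Δ / (50 * L) ≤ vτ ^ 2 := by
    have h2 : 0 ≤ τ * ‖gradient f x0‖ / 8 := by positivity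
    have h3 : (τ * ‖gradient f x0‖ / 8) ^ 2 ≤ vτ ^ 2 := by nlinarith [hlow]
    have h4 : (τ * ‖gradient f x0‖ / 8) ^ 2 = τ ^ 2 * ‖gradient f x0‖ ^ 2 / 64 := by ring
    rw [h4, hτsq] at h3
    have h5 : 16 / (25 * L) * ‖gradient f x0‖ ^ 2 / 64 = ‖gradient f x0‖ ^ 2 / (100 * L) := by
      field_simp
      ring
    rw [h5] at h3
    have h6 : μ * Δ / (50 * L) ≤ ‖gradient f x0‖ ^ 2 / (100 * L) := by
      rw [div_le_div_iff₀ (by positivity) (by positivity)]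
      nlinarith [hg0sq, hL]
    linarith
  have hfinal : ∀ t' ∈ Ioo τ t, t' ≤ τ * Real.exp (17 * L / μ) := by
    intro t' ht'
    have hA := hstep t' ht'
    have hvpos : 0 < vτ ^ 2 := lt_of_lt_of_le (by positivity) hvτsq
    have hlog : Real.log t' - Real.log τ ≤ 17 * L / μ := by
      rcases le_or_gt (Real.log t' - Real.log τ) 0 with hneg | hposA
      · have hnn : (0:ℝ) ≤ 17 * L / μ := by positivity
        linarith
      · have h2 : 3 * (μ * Δ / (50 * L)) * (Real.log t' - Real.log τ) ≤ Δ := by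
          calc 3 * (μ * Δ / (50 * L)) * (Real.log t' - Real.log τ)
              ≤ 3 * vτ ^ 2 * (Real.log t' - Real.log τ) := by
                apply mul_le_mul_of_nonneg_right _ hposA.le
                linarith [hvτsq]
            _ ≤ Δ := hA
        have h50 : (0:ℝ) < 50 * L := by positivity
        have h3 : 3 * μ * Δ * (Real.log t' - Real.log τ) ≤ 50 * L * Δ := by
          have hdc : μ * Δ / (50 * L) * (50 * L) = μ * Δ :=
            div_mul_cancel₀ _ h50.ne'
          have hc : 3 * μ * Δ * (Real.log t' - Real.log τ)
              = (3 * (μ * Δ / (50 * L)) * (Real.log t' - Real.log τ)) * (50 * L) := by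
            calc 3 * μ * Δ * (Real.log t' - Real.log τ)
                = 3 * (μ * Δ / (50 * L) * (50 * L)) * (Real.log t' - Real.log τ) := by
                  rw [hdc]
                  ring
              _ = (3 * (μ * Δ / (50 * L)) * (Real.log t' - Real.log τ)) * (50 * L) := by ring
          rw [hc]
          calc (3 * (μ * Δ / (50 * L)) * (Real.log t' - Real.log τ)) * (50 * L)
              ≤ Δ * (50 * L) := mul_le_mul_of_nonneg_right h2 h50.le
            _ = 50 * L * Δ := by ring
        have h4 : 3 * (μ * (Real.log t' - Real.log τ)) * Δ ≤ (50 * L) * Δ := by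
          nlinarith [h3]
        have h5 : 3 * (μ * (Real.log t' - Real.log τ)) ≤ 50 * L :=
          le_of_mul_le_mul_right (by linarith [h4]) hΔpos
        rw [le_div_iff₀ hμ]
        nlinarith [h5, hL]
    have ht'pos : 0 < t' := hτ.trans ht'.1
    have hlog2 : Real.log t' ≤ Real.log τ + 17 * L / μ := by linarith
    calc t' = Real.exp (Real.log t') := (Real.exp_log ht'pos).symm
      _ ≤ Real.exp (Real.log τ + 17 * L / μ) := Real.exp_le_exp.2 hlog2
      _ = τ * Real.exp (17 * L / μ) := by rw [Real.exp_add, Real.exp_log hτ]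
  by_contra hcon
  push_neg at hcon
  have hτB : τ ≤ τ * Real.exp (17 * L / μ) := by nlinarith [hexp1, hτ]
  set Bd : ℝ := τ * Real.exp (17 * L / μ) with hBddef
  have ht'1 : Bd < (Bd + t) / 2 := by linarith
  have ht'2 : (Bd + t) / 2 < t := by linarith
  have ht'3 : τ < (Bd + t) / 2 := lt_of_le_of_lt hτB ht'1
  have := hfinal ((Bd + t) / 2) ⟨ht'3, ht'2⟩
  linarith

/-- **Lemma (upper bound on the restarting time).** There is a universal constant `C̃ > 0`
such that for every `f ∈ S_{μ,L}` and `x₀ ≠ x⋆`, the speed restarting time of the Nesterov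
ODE solution satisfies `T(x₀; f) ≤ (4/(5√L)) exp(C̃ L/μ)`. -/
theorem speed_restart_time_upper_bound :
    ∃ C > (0:ℝ), ∀ (n : ℕ) (μ L : ℝ), 0 < μ → μ ≤ L →
      ∀ f : E n → ℝ, MemS n μ L f →
      ∀ xstar : E n, IsMinOn f Set.univ xstar →
      ∀ x0 : E n, x0 ≠ xstar →
      ∀ X : ℝ → E n, NesterovSol n f x0 X →
        SpeedRestartTime n X ≤ 4 / (5 * Real.sqrt L) * Real.exp (C * L / μ) := by
  refine ⟨17, by norm_num, ?_⟩
  intro n μ L hμ hμL f hf xstar hmin x0 hx0 X hX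
  apply Real.sSup_le
  · rintro t ⟨ht, hder⟩
    exact main_bound hμ hμL hf hmin hx0 hX ht hder
  · positivity
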